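/- Let n ≥ 1 and let x₁ ≤ x₂ ≤ ⋯ ≤ x_{2n} be a nondecreasing 2n-tuple of real numbers. For every partition of the index set {1, …, 2n} into n pairwise disjoint pairs {i₁,j₁}, …, {i_n,j_n}, the partition into consecutive pairs minimizes the sum of squared differences: ∑_{m=1}^{n} (x_{2m} − x_{2m−1})² ≤ ∑_{m=1}^{n} (x_{j_m} − x_{i_m})². -/

import Mathlib

lemma sum_sq_le_sq_sum {α : Type*} (s : Finset α) (f : α → ℝ)
    (hf : ∀ a ∈ s, 0 ≤ f a) : ∑ a ∈ s, (f a) ^ 2 ≤ (∑ a ∈ s, f a) ^ 2 := by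
  have hs : 0 ≤ ∑ a ∈ s, f a := Finset.sum_nonneg hf
  calc ∑ a ∈ s, (f a) ^ 2 ≤ ∑ a ∈ s, f a * (∑ b ∈ s, f b) := by
        apply Finset.sum_le_sum
        intro a ha
        have h1 : f a ≤ ∑ b ∈ s, f b := Finset.single_le_sum hf ha
        calc (f a)^2 = f a * f a := sq (f a) ▸ (sq (f a)).symm ▸ (sq (f a))
          _ ≤ f a * (∑ b ∈ s, f b) := mul_le_mul_of_nonneg_left h1 (hf a ha)
    _ = (∑ a ∈ s, f a) ^ 2 := by rw [← Finset.sum_mul]; ring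

lemma telescope_y (y : ℕ → ℝ) {a b : ℕ} (h : a ≤ b) :
    ∑ t ∈ Finset.Ico a b, (y (t+1) - y t) = y b - y a := by
  rw [Finset.sum_Ico_eq_sub _ h, Finset.sum_range_sub, Finset.sum_range_sub]
  ring

/-- For a sorted `2n`-tuple, the partition into consecutive pairs minimizes
the total squared-difference distance over all partitions of the `2n`
indices into `n` pairwise disjoint pairs. -/
theorem consecutive_pairs_min_sq (n : ℕ) (hn : 1 ≤ n) (x : Fin (2 * n) → ℝ)
    (hx : Monotone x) (i j : Fin n → Fin (2 * n)) (hij : ∀ m, i m ≠ j m)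
    (hdisj : ∀ m m', m ≠ m' →
      Disjoint ({i m, j m} : Finset (Fin (2 * n))) {i m', j m'})
    (hcover : ∀ p : Fin (2 * n), ∃ m, p = i m ∨ p = j m) :
    ∑ m : Fin n,
        (x ⟨2 * (m : ℕ) + 1, by have := m.isLt; omega⟩ -
          x ⟨2 * (m : ℕ), by have := m.isLt; omega⟩) ^ 2 ≤
      ∑ m : Fin n, (x (j m) - x (i m)) ^ 2 := by
  classical
  have hN1 : 1 ≤ 2 * n := by omega
  -- extend x to ℕ
  set y : ℕ → ℝ := fun t => x ⟨min t (2 * n - 1), by omega⟩ with hy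
  have hyx : ∀ p : Fin (2 * n), y (p : ℕ) = x p := by
    intro p
    apply congrArg x
    apply Fin.ext
    have := p.isLt
    simp only []
    omega
  have hymono : ∀ a b : ℕ, a ≤ b → y a ≤ y b := by
    intro a b h
    apply hx
    simp only [Fin.mk_le_mk]
    omega
  -- covering pair for each gap
  have hcov : ∀ m : Fin n, ∃ p : Fin n,
      min (i p : ℕ) (j p : ℕ) ≤ 2 * m ∧ 2 * m + 1 ≤ max (i p : ℕ) (j p : ℕ) := by
    intro m
    set A : Finset (Fin (2 * n)) := Finset.Iic ⟨2 * m, by have := m.isLt; omega⟩ with hA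
    have hAmem : ∀ q : Fin (2 * n), q ∈ A ↔ (q : ℕ) ≤ 2 * m := by
      intro q; simp [hA, Fin.le_def]
    by_contra hcon
    push_neg at hcon
    have hxor : ∀ p : Fin n, (i p ∈ A ↔ j p ∈ A) := by
      intro p
      have h := hcon p
      rw [hAmem, hAmem]
      omega
    have hAeq : A = Finset.univ.biUnion (fun p : Fin n => ({i p, j p} ∩ A)) := by
      ext q
      simp only [Finset.mem_biUnion, Finset.mem_univ, true_and, Finset.mem_inter,
        Finset.mem_insert, Finset.mem_singleton]
      constructor
      · intro hq
        obtain ⟨p, hp⟩ := hcover q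
        exact ⟨p, by tauto, hq⟩
      · rintro ⟨p, _, hq⟩; exact hq
    have hcard : A.card = ∑ p : Fin n, ({i p, j p} ∩ A).card := by
      nth_rewrite 1 [hAeq]
      exact Finset.card_biUnion (fun p _ q _ hpq =>
        Finset.disjoint_of_subset_left Finset.inter_subset_left
          (Finset.disjoint_of_subset_right Finset.inter_subset_left (hdisj p q hpq)))
    have heven : Even (∑ p : Fin n, ({i p, j p} ∩ A).card) := by
      apply Finset.even_sum
      intro p _
      by_cases hi : i p ∈ A
      · have hj : j p ∈ A := (hxor p).1 hi
        have : ({i p, j p} : Finset (Fin (2 * n))) ∩ A = {i p, j p} := by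
          apply Finset.inter_eq_left.mpr
          intro q hq
          simp only [Finset.mem_insert, Finset.mem_singleton] at hq
          rcases hq with rfl | rfl <;> assumption
        rw [this, Finset.card_pair (hij p)]
        exact ⟨1, rfl⟩
      · have hj : j p ∉ A := fun h => hi ((hxor p).2 h)
        have : ({i p, j p} : Finset (Fin (2 * n))) ∩ A = ∅ := by
          apply Finset.eq_empty_iff_forall_notMem.mpr
          intro q hq
          simp only [Finset.mem_inter, Finset.mem_insert, Finset.mem_singleton] at hq
          rcases hq with ⟨rfl | rfl, hq2⟩ <;> [exact hi hq2; exact hj hq2]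
        rw [this]
        exact ⟨0, rfl⟩
    have hAcard : A.card = 2 * m + 1 := by
      rw [hA, Fin.card_Iic]
    rw [hcard] at hAcard
    rw [hAcard] at heven
    obtain ⟨k, hk⟩ := heven
    omega
  choose f hf1 hf2 using hcov
  set a : Fin n → ℕ := fun p => min (i p : ℕ) (j p : ℕ) with ha
  set b : Fin n → ℕ := fun p => max (i p : ℕ) (j p : ℕ) with hb
  -- rewrite LHS
  have hLHS : ∀ m : Fin n,
      (x ⟨2 * (m : ℕ) + 1, by have := m.isLt; omega⟩ -
          x ⟨2 * (m : ℕ), by have := m.isLt; omega⟩) ^ 2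
        = (y (2 * (m : ℕ) + 1) - y (2 * (m : ℕ))) ^ 2 := by
    intro m
    rw [show y (2 * (m : ℕ) + 1) = x ⟨2 * (m : ℕ) + 1, by have := m.isLt; omega⟩ from
      hyx ⟨2 * (m : ℕ) + 1, by have := m.isLt; omega⟩,
      show y (2 * (m : ℕ)) = x ⟨2 * (m : ℕ), by have := m.isLt; omega⟩ from
      hyx ⟨2 * (m : ℕ), by have := m.isLt; omega⟩]
  -- rewrite RHS
  have hRHS : ∀ p : Fin n, (x (j p) - x (i p)) ^ 2 = (y (b p) - y (a p)) ^ 2 := by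
    intro p
    rcases le_total (i p : ℕ) (j p : ℕ) with h | h
    · have hap : a p = (i p : ℕ) := min_eq_left h
      have hbp : b p = (j p : ℕ) := max_eq_right h
      rw [hap, hbp, hyx, hyx]
    · have hap : a p = (j p : ℕ) := min_eq_right h
      have hbp : b p = (i p : ℕ) := max_eq_left h
      rw [hap, hbp, hyx, hyx]
      ring
  -- key per-pair bound
  have key : ∀ p : Fin n,
      ∑ m ∈ Finset.univ.filter (fun m => f m = p),
        (y (2 * (m : ℕ) + 1) - y (2 * (m : ℕ))) ^ 2 ≤ (y (b p) - y (a p)) ^ 2 := by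
    intro p
    set s := Finset.univ.filter (fun m : Fin n => f m = p) with hs
    rcases s.eq_empty_or_nonempty with hse | ⟨m0, hm0⟩
    · rw [hse]
      simp [sq_nonneg]
    · have hab : a p ≤ b p := by
        have h0 : f m0 = p := by simpa [hs] using hm0
        have hu1 := hf1 m0
        have hu2 := hf2 m0
        rw [h0] at hu1 hu2
        simp only [ha, hb]
        omega
      have hnn : ∀ m ∈ s, 0 ≤ y (2 * (m : ℕ) + 1) - y (2 * (m : ℕ)) := by
        intro m _
        have := hymono (2 * (m : ℕ)) (2 * (m : ℕ) + 1) (by omega)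
        linarith
      have h1 : ∑ m ∈ s, (y (2 * (m : ℕ) + 1) - y (2 * (m : ℕ))) ^ 2
          ≤ (∑ m ∈ s, (y (2 * (m : ℕ) + 1) - y (2 * (m : ℕ)))) ^ 2 :=
        sum_sq_le_sq_sum s _ hnn
      have h2 : ∑ m ∈ s, (y (2 * (m : ℕ) + 1) - y (2 * (m : ℕ)))
          ≤ ∑ t ∈ Finset.Ico (a p) (b p), (y (t + 1) - y t) := by
        have himg : ∑ m ∈ s, (y (2 * (m : ℕ) + 1) - y (2 * (m : ℕ)))
            = ∑ t ∈ s.image (fun m : Fin n => 2 * (m : ℕ)), (y (t + 1) - y t) := by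
          rw [Finset.sum_image]
          intro m1 _ m2 _ h
          apply Fin.ext
          beta_reduce at h
          omega
        rw [himg]
        apply Finset.sum_le_sum_of_subset_of_nonneg
        · intro t ht
          simp only [Finset.mem_image, hs, Finset.mem_filter, Finset.mem_univ, true_and] at ht
          obtain ⟨m, hm, rfl⟩ := ht
          have h1 := hf1 m
          have h2 := hf2 m
          rw [hm] at h1 h2
          rw [Finset.mem_Ico]
          simp only [ha, hb] at h1 h2 ⊢
          omega
        · intro t _ _
          have := hymono t (t + 1) (by omega)
          linarith
      rw [telescope_y y hab] at h2
      calc ∑ m ∈ s, (y (2 * (m : ℕ) + 1) - y (2 * (m : ℕ))) ^ 2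
          ≤ (∑ m ∈ s, (y (2 * (m : ℕ) + 1) - y (2 * (m : ℕ)))) ^ 2 := h1
        _ ≤ (y (b p) - y (a p)) ^ 2 :=
            pow_le_pow_left₀ (Finset.sum_nonneg hnn) h2 2
  calc ∑ m : Fin n,
        (x ⟨2 * (m : ℕ) + 1, by have := m.isLt; omega⟩ -
          x ⟨2 * (m : ℕ), by have := m.isLt; omega⟩) ^ 2
      = ∑ m : Fin n, (y (2 * (m : ℕ) + 1) - y (2 * (m : ℕ))) ^ 2 :=
        Finset.sum_congr rfl (fun m _ => hLHS m)
    _ = ∑ p : Fin n, ∑ m ∈ Finset.univ.filter (fun m => f m = p),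
          (y (2 * (m : ℕ) + 1) - y (2 * (m : ℕ))) ^ 2 :=
        (Finset.sum_fiberwise Finset.univ f _).symm
    _ ≤ ∑ p : Fin n, (y (b p) - y (a p)) ^ 2 := Finset.sum_le_sum (fun p _ => key p)
    _ = ∑ p : Fin n, (x (j p) - x (i p)) ^ 2 :=
        Finset.sum_congr rfl (fun p _ => (hRHS p).symm)
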